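/- Let 0 < β < 1, λ > 0, α ≥ 0, and let ξ be a real number. Then the function y ↦ (e^{−iyξ} − 1)·α·e^{−λy}·y^{−1−β} is integrable on (0,∞) and ∫₀^∞ (e^{−iyξ} − 1)·α·e^{−λy}·y^{−1−β} dy = α·Γ(−β)·((λ + iξ)^β − λ^β), where z^β denotes the principal complex power. -/

import Mathlib

open MeasureTheory Set Complex Filter

namespace GtsAux

lemma real_int {b s : ℝ} (hs : -1 < s) (hb : 0 < b) :
    IntegrableOn (fun y : ℝ => y ^ s * Real.exp (-b * y)) (Ioi 0) := by
  simpa using integrableOn_rpow_mul_exp_neg_mul_rpow hs zero_lt_one hb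

lemma cexp_rpow_cont {s : ℝ} (z : ℂ) :
    ContinuousOn (fun y : ℝ => Complex.exp (-z * y) * ((y ^ s : ℝ) : ℂ)) (Ioi 0) := by
  apply ContinuousOn.mul
  · exact (Complex.continuous_exp.comp
      (continuous_const.mul Complex.continuous_ofReal)).continuousOn
  · exact Complex.continuous_ofReal.comp_continuousOn
      (continuousOn_id.rpow_const (fun x hx => Or.inl (ne_of_gt hx)))

lemma norm_cexp_rpow {s : ℝ} (z : ℂ) {y : ℝ} (hy : 0 < y) :
    ‖Complex.exp (-z * y) * ((y ^ s : ℝ) : ℂ)‖ = y ^ s * Real.exp (-z.re * y) := by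
  rw [norm_mul, Complex.norm_exp, Complex.norm_real, Real.norm_eq_abs,
    _root_.abs_of_nonneg (Real.rpow_nonneg hy.le s)]
  rw [mul_comm]
  congr 1
  simp [Complex.mul_re]

lemma intOn_cexp_rpow {s : ℝ} (hs : -1 < s) {z : ℂ} (hz : 0 < z.re) :
    IntegrableOn (fun y : ℝ => Complex.exp (-z * y) * ((y ^ s : ℝ) : ℂ)) (Ioi 0) := by
  refine Integrable.mono' (real_int hs hz)
    ((cexp_rpow_cont z).aestronglyMeasurable measurableSet_Ioi) ?_
  filter_upwards [ae_restrict_mem measurableSet_Ioi] with y hy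
  rw [norm_cexp_rpow z hy]

lemma hasDerivAt_cexp (z : ℂ) (y : ℝ) :
    HasDerivAt (fun y : ℝ => Complex.exp (-z * y)) (-z * Complex.exp (-z * y)) y := by
  have h1 : HasDerivAt (fun y : ℝ => -z * (y : ℂ)) (-z) y := by
    simpa using (Complex.ofRealCLM.hasDerivAt (x := y)).const_mul (-z)
  simpa [mul_comm] using h1.cexp

lemma hasDerivAt_orpow (s : ℝ) {y : ℝ} (hy : 0 < y) :
    HasDerivAt (fun y : ℝ => ((y ^ s : ℝ) : ℂ)) ((s * y ^ (s - 1) : ℝ) : ℂ) y :=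
  (Real.hasDerivAt_rpow_const (Or.inl hy.ne')).ofReal_comp

lemma rpow_succ {y : ℝ} (hy : 0 < y) (s : ℝ) : y ^ s = y * y ^ (s - 1) := by
  rw [show s = 1 + (s - 1) by ring, Real.rpow_add hy, Real.rpow_one]
  ring_nf

/-- Integration by parts identity. -/
lemma ibp {s : ℝ} (hs : 0 < s) {z : ℂ} (hz : 0 < z.re) :
    z * ∫ y in Ioi (0 : ℝ), Complex.exp (-z * y) * ((y ^ s : ℝ) : ℂ)
      = s * ∫ y in Ioi (0 : ℝ), Complex.exp (-z * y) * ((y ^ (s - 1) : ℝ) : ℂ) := by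
  set g : ℝ → ℂ := fun y => Complex.exp (-z * y) * ((y ^ s : ℝ) : ℂ) with hg
  set g' : ℝ → ℂ := fun y =>
    (-z) * (Complex.exp (-z * y) * ((y ^ s : ℝ) : ℂ))
      + (s : ℂ) * (Complex.exp (-z * y) * ((y ^ (s - 1) : ℝ) : ℂ)) with hg'
  have hderiv : ∀ y ∈ Ioi (0 : ℝ), HasDerivAt g (g' y) y := by
    intro y hy
    have := (hasDerivAt_cexp z y).mul (hasDerivAt_orpow s hy)
    refine HasDerivAt.congr_deriv this (Eq.symm ?_)
    simp only [hg']
    push_cast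
    ring
  have hcont : ContinuousWithinAt g (Ici (0 : ℝ)) 0 := by
    apply ContinuousAt.continuousWithinAt
    apply ContinuousAt.mul
    · exact (Complex.continuous_exp.comp (continuous_const.mul Complex.continuous_ofReal)).continuousAt
    · exact Complex.continuous_ofReal.continuousAt.comp
        (Real.continuousAt_rpow_const 0 s (Or.inr hs.le))
  have hint1 : IntegrableOn (fun y : ℝ => Complex.exp (-z * y) * ((y ^ s : ℝ) : ℂ)) (Ioi 0) :=
    intOn_cexp_rpow (by linarith) hz
  have hint2 : IntegrableOn (fun y : ℝ => Complex.exp (-z * y) * ((y ^ (s - 1) : ℝ) : ℂ)) (Ioi 0) :=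
    intOn_cexp_rpow (by linarith) hz
  have hint : IntegrableOn g' (Ioi 0) := (hint1.const_mul _).add (hint2.const_mul _)
  have htend : Tendsto g atTop (nhds 0) := by
    apply squeeze_zero_norm' ?_ (tendsto_rpow_mul_exp_neg_mul_atTop_nhds_zero s z.re hz)
    filter_upwards [Ioi_mem_atTop (0 : ℝ)] with y hy
    rw [norm_cexp_rpow z hy]
  have key := integral_Ioi_of_hasDerivAt_of_tendsto hcont hderiv hint htend
  have hg0 : g 0 = 0 := by
    simp [hg, Real.zero_rpow hs.ne']
  rw [hg0, zero_sub, neg_zero] at key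
  rw [integral_add (hint1.const_mul _) (hint2.const_mul _), MeasureTheory.integral_const_mul,
    MeasureTheory.integral_const_mul] at key
  linear_combination -key


lemma w_re (lam ξ : ℝ) : ((lam : ℂ) + Complex.I * ξ).re = lam := by simp

lemma w_ne {lam : ℝ} (hlam : 0 < lam) (ξ : ℝ) : (lam : ℂ) + Complex.I * ξ ≠ 0 := by
  intro h
  have : ((lam : ℂ) + Complex.I * ξ).re = 0 := by rw [h]; simp
  rw [w_re] at this
  exact hlam.ne' this

lemma hasDerivAt_w (lam ξ : ℝ) :
    HasDerivAt (fun t : ℝ => (lam : ℂ) + Complex.I * t) Complex.I ξ := by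
  simpa using ((Complex.ofRealCLM.hasDerivAt (x := ξ)).const_mul Complex.I).const_add (lam : ℂ)

/-- The family of derivatives in the parameter `ξ`, for `y > 0`. -/
lemma hasDerivAt_param {lam : ℝ} (s : ℝ) {y : ℝ} (hy : 0 < y) (x : ℝ) :
    HasDerivAt (fun t : ℝ => Complex.exp (-((lam : ℂ) + Complex.I * t) * y) * ((y ^ (s - 1) : ℝ) : ℂ))
      (-Complex.I * (Complex.exp (-((lam : ℂ) + Complex.I * x) * y) * ((y ^ s : ℝ) : ℂ))) x := by
  have hinner : HasDerivAt (fun t : ℝ => -((lam : ℂ) + Complex.I * t) * y)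
      (-(Complex.I * y)) x := by
    have h0 : HasDerivAt (fun t : ℝ => (-(Complex.I * (y : ℂ))) * (t : ℂ) + (-(lam : ℂ) * y))
        (-(Complex.I * y)) x := by
      simpa using ((Complex.ofRealCLM.hasDerivAt (x := x)).const_mul
        (-(Complex.I * (y : ℂ)))).add_const (-(lam : ℂ) * y)
    convert h0 using 1
    funext t
    ring
  have := (hinner.cexp.mul_const ((y ^ (s - 1) : ℝ) : ℂ))
  refine HasDerivAt.congr_deriv this (Eq.symm ?_)
  rw [rpow_succ hy s]
  push_cast
  ring

/-- Laplace transform of `y ^ (s-1)` at `lam + I ξ`. -/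
lemma laplace_gamma {s lam : ℝ} (hs : 0 < s) (hlam : 0 < lam) (ξ : ℝ) :
    ∫ y in Ioi (0 : ℝ), Complex.exp (-((lam : ℂ) + Complex.I * ξ) * y) * ((y ^ (s - 1) : ℝ) : ℂ)
      = (Real.Gamma s : ℂ) * ((lam : ℂ) + Complex.I * ξ) ^ (-(s : ℂ)) := by
  set f : ℝ → ℂ := fun t =>
    ∫ y in Ioi (0 : ℝ), Complex.exp (-((lam : ℂ) + Complex.I * t) * y) * ((y ^ (s - 1) : ℝ) : ℂ)
    with hf
  set A : ℝ → ℂ := fun t =>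
    ∫ y in Ioi (0 : ℝ), Complex.exp (-((lam : ℂ) + Complex.I * t) * y) * ((y ^ s : ℝ) : ℂ)
    with hA
  have hwre : ∀ t : ℝ, (0:ℝ) < ((lam : ℂ) + Complex.I * t).re := fun t => by
    rw [w_re]; exact hlam
  have hfderiv : ∀ t : ℝ, HasDerivAt f (-Complex.I * A t) t := by
    intro t
    have key := hasDerivAt_integral_of_dominated_loc_of_deriv_le (μ := volume.restrict (Ioi 0))
      (F := fun (x : ℝ) (y : ℝ) => Complex.exp (-((lam : ℂ) + Complex.I * (x : ℂ)) * y) * ((y ^ (s - 1) : ℝ) : ℂ))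
      (F' := fun (x : ℝ) (y : ℝ) => -Complex.I * (Complex.exp (-((lam : ℂ) + Complex.I * (x : ℂ)) * y) * ((y ^ s : ℝ) : ℂ)))
      (bound := fun y => y ^ s * Real.exp (-lam * y)) (x₀ := t) (Metric.ball_mem_nhds t zero_lt_one)
      ?_ ?_ ?_ ?_ ?_ ?_
    · have := key.2
      rw [MeasureTheory.integral_const_mul] at this
      exact this
    · filter_upwards with x
      exact ((cexp_rpow_cont _).aestronglyMeasurable measurableSet_Ioi)
    · exact intOn_cexp_rpow (by linarith) (hwre t)
    · exact ((cexp_rpow_cont _).aestronglyMeasurable measurableSet_Ioi).const_mul _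
    · filter_upwards [ae_restrict_mem measurableSet_Ioi] with y hy
      intro x _
      rw [norm_mul]
      simp only [norm_neg, Complex.norm_I, one_mul]
      rw [norm_cexp_rpow _ hy, w_re]
    · exact real_int (by linarith) hlam
    · filter_upwards [ae_restrict_mem measurableSet_Ioi] with y hy
      intro x _
      exact hasDerivAt_param s hy x
  have hibp : ∀ t : ℝ, ((lam : ℂ) + Complex.I * t) * A t = (s : ℂ) * f t := fun t =>
    ibp hs (hwre t)
  -- h := f * w ^ s is constant
  set h : ℝ → ℂ := fun t => f t * ((lam : ℂ) + Complex.I * t) ^ (s : ℂ) with hh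
  have hhderiv : ∀ t : ℝ, HasDerivAt h 0 t := by
    intro t
    set w : ℂ := (lam : ℂ) + Complex.I * t with hw
    clear_value w
    have hwne : w ≠ 0 := hw ▸ w_ne hlam t
    have hslit : w ∈ Complex.slitPlane := Or.inl (hw ▸ hwre t)
    have hcp : HasDerivAt (fun t : ℝ => ((lam : ℂ) + Complex.I * t) ^ (s : ℂ))
        ((s : ℂ) * w ^ ((s : ℂ) - 1) * Complex.I) t := by
      rw [hw]
      have := ((Complex.hasStrictDerivAt_cpow_const (c := (s : ℂ))
        (x := (lam : ℂ) + Complex.I * t) (Or.inl (hwre t))).hasDerivAt).comp t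
        (hasDerivAt_w lam t)
      exact this
    have := (hfderiv t).mul hcp
    refine HasDerivAt.congr_deriv this (Eq.symm ?_)
    have hcpow : w ^ (s : ℂ) = w * w ^ ((s : ℂ) - 1) := by
      rw [show (s : ℂ) = 1 + ((s : ℂ) - 1) by ring, Complex.cpow_add _ _ hwne, Complex.cpow_one]
      ring_nf
    have hi := hibp t
    rw [← hw] at hi ⊢
    rw [hcpow]
    linear_combination (Complex.I * w ^ ((s : ℂ) - 1)) * hi
  have hconst : h ξ = h 0 := by
    have hdiff : Differentiable ℝ h := fun t => (hhderiv t).differentiableAt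
    exact is_const_of_deriv_eq_zero hdiff (fun t => (hhderiv t).deriv) ξ 0
  -- compute h 0
  have hf0 : f 0 = (1 / (lam : ℂ)) ^ (s : ℂ) * Complex.Gamma s := by
    rw [← Complex.integral_cpow_mul_exp_neg_mul_Ioi
      (show 0 < ((s : ℂ)).re by simpa using hs) hlam]
    simp only [hf]
    refine setIntegral_congr_fun measurableSet_Ioi (fun y hy => ?_)
    rw [Complex.ofReal_cpow (le_of_lt hy)]
    push_cast
    rw [mul_comm]
    congr 2
    ring
  have hlamne : (lam : ℂ) ≠ 0 := Complex.ofReal_ne_zero.mpr hlam.ne'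
  have hlcp : ((lam : ℂ)) ^ (s : ℂ) ≠ 0 := by
    rw [Ne, Complex.cpow_eq_zero_iff]
    tauto
  have hh0 : h 0 = (Real.Gamma s : ℂ) := by
    rw [hh]
    simp only [Complex.ofReal_zero, mul_zero, add_zero]
    rw [hf0, Complex.Gamma_ofReal, one_div, Complex.inv_cpow _ _ (by
      rw [Complex.arg_ofReal_of_nonneg hlam.le]; exact Real.pi_ne_zero.symm)]
    field_simp
  -- conclude
  have heq : f ξ * ((lam : ℂ) + Complex.I * ξ) ^ (s : ℂ) = (Real.Gamma s : ℂ) := by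
    rw [← hh0, ← hconst]
  have hwne : ((lam : ℂ) + Complex.I * ξ) ≠ 0 := w_ne hlam ξ
  have hwcp : ((lam : ℂ) + Complex.I * ξ) ^ (s : ℂ) ≠ 0 := by
    rw [Ne, Complex.cpow_eq_zero_iff]
    tauto
  show f ξ = _
  rw [Complex.cpow_neg, ← heq, mul_assoc, mul_inv_cancel₀ hwcp, mul_one]

lemma abs_exp_I_sub_one (t : ℝ) :
    ‖Complex.exp (Complex.I * t) - 1‖ ≤ 2 * |t| := by
  have h2 : ‖Complex.I * (t : ℂ)‖ = |t| := by
    simp [map_mul]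
  rcases le_or_gt ‖Complex.I * (t : ℂ)‖ 1 with h | h
  · have := Complex.norm_exp_sub_one_le h
    rw [h2] at this
    exact this
  · rw [h2] at h
    have h3 : ‖Complex.exp (Complex.I * t) - 1‖ ≤ ‖Complex.exp (Complex.I * t)‖ + ‖(1 : ℂ)‖ :=
      norm_sub_le _ _
    have h4 : ‖Complex.exp (Complex.I * t)‖ = 1 := by
      rw [Complex.norm_exp]
      simp
    rw [h4] at h3
    simp only [norm_one] at h3
    linarith

lemma exp_split {lam : ℝ} (ξ y : ℝ) :
    Complex.exp (-((lam : ℂ) + Complex.I * ξ) * y) - Complex.exp (-(lam : ℂ) * y)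
      = Complex.exp (-(lam : ℂ) * y) * (Complex.exp (Complex.I * ((-(ξ * y) : ℝ) : ℂ)) - 1) := by
  rw [mul_sub, mul_one, ← Complex.exp_add]
  congr 1
  push_cast
  ring

lemma main_int {β lam : ℝ} (hβ0 : 0 < β) (hβ1 : β < 1) (hlam : 0 < lam) (ξ : ℝ) :
    IntegrableOn (fun y : ℝ =>
      (Complex.exp (-((lam : ℂ) + Complex.I * ξ) * y) - Complex.exp (-(lam : ℂ) * y))
        * ((y ^ (-β - 1) : ℝ) : ℂ)) (Ioi 0) := by
  have hbound : IntegrableOn (fun y : ℝ => (2 * |ξ|) * (y ^ (-β) * Real.exp (-lam * y))) (Ioi 0) :=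
    (real_int (by linarith) hlam).const_mul _
  refine Integrable.mono' hbound ?_ ?_
  · apply ContinuousOn.aestronglyMeasurable ?_ measurableSet_Ioi
    apply ContinuousOn.mul
    · exact ((Complex.continuous_exp.comp (continuous_const.mul Complex.continuous_ofReal)).sub
        (Complex.continuous_exp.comp (continuous_const.mul Complex.continuous_ofReal))).continuousOn
    · exact Complex.continuous_ofReal.comp_continuousOn
        (continuousOn_id.rpow_const (fun x hx => Or.inl (ne_of_gt hx)))
  · filter_upwards [ae_restrict_mem measurableSet_Ioi] with y hy
    rw [norm_mul, exp_split, norm_mul]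
    have h1 : ‖Complex.exp (-(lam : ℂ) * y)‖ = Real.exp (-lam * y) := by
      rw [Complex.norm_exp]
      congr 1
      simp [Complex.mul_re]
    have h2 : ‖((y ^ (-β - 1) : ℝ) : ℂ)‖ = y ^ (-β - 1) := by
      rw [Complex.norm_real, Real.norm_eq_abs,
        _root_.abs_of_nonneg (Real.rpow_nonneg (le_of_lt (show (0:ℝ) < y from hy)) _)]
    rw [h1, h2]
    have h3 := abs_exp_I_sub_one (-(ξ * y))
    have h4 : |(-(ξ * y))| = |ξ| * y := by
      rw [abs_neg, abs_mul, _root_.abs_of_nonneg (le_of_lt (show (0:ℝ) < y from hy))]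
    rw [h4] at h3
    have h5 : y ^ (-β : ℝ) = y * y ^ (-β - 1) := rpow_succ hy (-β)
    have hrp : (0:ℝ) ≤ y ^ (-β - 1) := Real.rpow_nonneg hy.le _
    have hexp : (0:ℝ) < Real.exp (-lam * y) := Real.exp_pos _
    calc Real.exp (-lam * y) * ‖Complex.exp (Complex.I * ((-(ξ * y) : ℝ) : ℂ)) - 1‖ * y ^ (-β - 1)
        ≤ Real.exp (-lam * y) * (2 * (|ξ| * y)) * y ^ (-β - 1) := by
          gcongr
      _ = 2 * |ξ| * (y ^ (-β) * Real.exp (-lam * y)) := by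
          rw [h5]; ring

lemma main_eq {β lam : ℝ} (hβ0 : 0 < β) (hβ1 : β < 1) (hlam : 0 < lam) (ξ : ℝ) :
    ∫ y in Ioi (0 : ℝ),
        (Complex.exp (-((lam : ℂ) + Complex.I * ξ) * y) - Complex.exp (-(lam : ℂ) * y))
          * ((y ^ (-β - 1) : ℝ) : ℂ)
      = (Real.Gamma (-β) : ℂ)
          * (((lam : ℂ) + Complex.I * ξ) ^ (β : ℂ) - (lam : ℂ) ^ (β : ℂ)) := by
  have hwre : ∀ t : ℝ, (0:ℝ) < ((lam : ℂ) + Complex.I * t).re := fun t => by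
    rw [w_re]; exact hlam
  set Fi : ℝ → ℂ := fun t =>
    ∫ y in Ioi (0 : ℝ),
      (Complex.exp (-((lam : ℂ) + Complex.I * t) * y) - Complex.exp (-(lam : ℂ) * y))
        * ((y ^ (-β - 1) : ℝ) : ℂ) with hFi
  set G : ℝ → ℂ := fun t =>
    (Real.Gamma (-β) : ℂ) * (((lam : ℂ) + Complex.I * t) ^ (β : ℂ) - (lam : ℂ) ^ (β : ℂ))
    with hG
  -- value of the A-integral via laplace_gamma
  have hA : ∀ t : ℝ,
      (∫ y in Ioi (0 : ℝ), Complex.exp (-((lam : ℂ) + Complex.I * t) * y) * ((y ^ (-β) : ℝ) : ℂ))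
        = (Real.Gamma (1 - β) : ℂ) * ((lam : ℂ) + Complex.I * t) ^ (-(((1 - β : ℝ)) : ℂ)) := by
    intro t
    rw [show (-β : ℝ) = 1 - β - 1 from by ring]
    exact laplace_gamma (by linarith) hlam t
  -- derivative of Fi
  have hFideriv : ∀ t : ℝ, HasDerivAt Fi
      (-Complex.I * ((Real.Gamma (1 - β) : ℂ)
        * ((lam : ℂ) + Complex.I * t) ^ (-(((1 - β : ℝ)) : ℂ)))) t := by
    intro t
    have key := hasDerivAt_integral_of_dominated_loc_of_deriv_le (μ := volume.restrict (Ioi 0))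
      (F := fun (x : ℝ) (y : ℝ) =>
        (Complex.exp (-((lam : ℂ) + Complex.I * (x : ℂ)) * y) - Complex.exp (-(lam : ℂ) * y))
          * ((y ^ (-β - 1) : ℝ) : ℂ))
      (F' := fun (x : ℝ) (y : ℝ) =>
        -Complex.I * (Complex.exp (-((lam : ℂ) + Complex.I * (x : ℂ)) * y) * ((y ^ (-β) : ℝ) : ℂ)))
      (bound := fun y => y ^ (-β) * Real.exp (-lam * y)) (x₀ := t) (Metric.ball_mem_nhds t zero_lt_one)
      ?_ ?_ ?_ ?_ ?_ ?_
    · have := key.2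
      rw [MeasureTheory.integral_const_mul, hA t] at this
      exact this
    · filter_upwards with x
      exact (main_int hβ0 hβ1 hlam x).aestronglyMeasurable
    · exact main_int hβ0 hβ1 hlam t
    · exact ((cexp_rpow_cont _).aestronglyMeasurable measurableSet_Ioi).const_mul _
    · filter_upwards [ae_restrict_mem measurableSet_Ioi] with y hy
      intro x _
      rw [norm_mul]
      simp only [norm_neg, Complex.norm_I, one_mul]
      rw [norm_cexp_rpow _ hy, w_re]
    · exact real_int (by linarith) hlam
    · filter_upwards [ae_restrict_mem measurableSet_Ioi] with y hy
      intro x _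
      have h1 := (hasDerivAt_param (lam := lam) (-β) hy x).sub_const
        (Complex.exp (-(lam : ℂ) * y) * ((y ^ (-β - 1) : ℝ) : ℂ))
      convert h1 using 2 with t
      ring
  -- derivative of G
  have hGderiv : ∀ t : ℝ, HasDerivAt G
      ((Real.Gamma (-β) : ℂ) * ((β : ℂ) * ((lam : ℂ) + Complex.I * t) ^ ((β : ℂ) - 1)
        * Complex.I)) t := by
    intro t
    have hcp : HasDerivAt (fun t : ℝ => ((lam : ℂ) + Complex.I * t) ^ (β : ℂ))
        ((β : ℂ) * ((lam : ℂ) + Complex.I * t) ^ ((β : ℂ) - 1) * Complex.I) t := by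
      have := ((Complex.hasStrictDerivAt_cpow_const (c := (β : ℂ))
        (x := (lam : ℂ) + Complex.I * t) (Or.inl (hwre t))).hasDerivAt).comp t
        (hasDerivAt_w lam t)
      exact this
    exact ((hcp.sub_const ((lam : ℂ) ^ (β : ℂ))).const_mul _)
  -- the two derivatives agree
  have hGamma : (Real.Gamma (1 - β) : ℂ) = (-β : ℂ) * (Real.Gamma (-β) : ℂ) := by
    have := Real.Gamma_add_one (neg_ne_zero.mpr hβ0.ne')
    rw [show (-β + 1 : ℝ) = 1 - β from by ring] at this
    rw [this]
    push_cast
    ring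
  have hderiveq : ∀ t : ℝ,
      -Complex.I * ((Real.Gamma (1 - β) : ℂ)
        * ((lam : ℂ) + Complex.I * t) ^ (-(((1 - β : ℝ)) : ℂ)))
      = (Real.Gamma (-β) : ℂ) * ((β : ℂ) * ((lam : ℂ) + Complex.I * t) ^ ((β : ℂ) - 1)
        * Complex.I) := by
    intro t
    rw [show (-(((1 - β : ℝ)) : ℂ)) = (β : ℂ) - 1 from by push_cast; ring, hGamma]
    ring
  -- D := Fi - G is constant
  have hD : ∀ t : ℝ, HasDerivAt (fun t => Fi t - G t) 0 t := by
    intro t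
    have := (hFideriv t).sub (hGderiv t)
    rw [hderiveq t, sub_self] at this
    exact this
  have hconst : Fi ξ - G ξ = Fi 0 - G 0 :=
    is_const_of_deriv_eq_zero (fun t => (hD t).differentiableAt) (fun t => (hD t).deriv) ξ 0
  have hFi0 : Fi 0 = 0 := by
    rw [hFi]
    simp
  have hG0 : G 0 = 0 := by
    rw [hG]
    simp
  have : Fi ξ = G ξ := by
    rw [hFi0, hG0] at hconst
    linear_combination hconst
  exact this

end GtsAux

/-- Let `0 < β < 1`, `λ > 0`, `α ≥ 0`, and `ξ : ℝ`. Then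
`y ↦ (e^{−iyξ} − 1)·α·e^{−λy}·y^{−1−β}` is integrable on `(0,∞)` and its integral equals
`α·Γ(−β)·((λ + iξ)^β − λ^β)` (principal complex power). -/
theorem gts_left_tail_integral (β lam α ξ : ℝ) (hβ0 : 0 < β) (hβ1 : β < 1)
    (hlam : 0 < lam) (hα : 0 ≤ α) :
    IntegrableOn (fun y : ℝ =>
        (Complex.exp (-(Complex.I * y * ξ)) - 1) * (α : ℂ) * Complex.exp (-(lam : ℂ) * y)
          * ((y ^ (-1 - β) : ℝ) : ℂ)) (Ioi 0) ∧
      ∫ y in Ioi (0 : ℝ),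
          (Complex.exp (-(Complex.I * y * ξ)) - 1) * (α : ℂ) * Complex.exp (-(lam : ℂ) * y)
            * ((y ^ (-1 - β) : ℝ) : ℂ)
        = (α : ℂ) * (Real.Gamma (-β) : ℂ)
            * (((lam : ℂ) + Complex.I * ξ) ^ (β : ℂ) - (lam : ℂ) ^ (β : ℂ)) := by
  have hfun : (fun y : ℝ =>
      (Complex.exp (-(Complex.I * y * ξ)) - 1) * (α : ℂ) * Complex.exp (-(lam : ℂ) * y)
        * ((y ^ (-1 - β) : ℝ) : ℂ))
      = fun y : ℝ => (α : ℂ) *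
        ((Complex.exp (-((lam : ℂ) + Complex.I * ξ) * y) - Complex.exp (-(lam : ℂ) * y))
          * ((y ^ (-β - 1) : ℝ) : ℂ)) := by
    funext y
    rw [show (-1 - β : ℝ) = -β - 1 from by ring]
    rw [show (-((lam : ℂ) + Complex.I * ξ) * y)
        = (-(Complex.I * y * ξ)) + (-(lam : ℂ) * y) from by push_cast; ring,
      Complex.exp_add]
    ring
  constructor
  · rw [hfun]
    exact (GtsAux.main_int hβ0 hβ1 hlam ξ).const_mul _
  · rw [hfun, MeasureTheory.integral_const_mul, GtsAux.main_eq hβ0 hβ1 hlam ξ]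
    ring
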